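/- Let V be a real Hilbert space and A : V → V Lipschitz continuous with constant c_A. Let T > 0, N ∈ ℕ, ΔT = T/N, t_n = nΔT, and w_0, …, w_N ∈ V with piecewise linear interpolant w^N(t) = w_{n-1} + ((t − t_{n-1})/ΔT)(w_n − w_{n-1}) for t ∈ [t_{n-1}, t_n], whose derivative is ẇ^N(t) = (w_n − w_{n-1})/ΔT for almost every t ∈ (t_{n-1}, t_n). Then | Σ_{n=1}^N ⟪A(w_n), w_n − w_{n-1}⟫ − ∫_0^T ⟪A(w^N(s)), ẇ^N(s)⟫ ds | ≤ (c_A / 2) Σ_{n=1}^N ‖w_n − w_{n-1}‖². -/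

import Mathlib

open scoped RealInnerProductSpace
open MeasureTheory

/-- Quadrature estimate for the term `⟪A(wᴺ), ẇᴺ⟫`: the sum `Σₙ ⟪A(wₙ), Δwₙ⟫`
differs from the integral by at most `(c_A/2) Σₙ ‖Δwₙ‖²`. -/
theorem derivative_quadrature_estimate
    {V : Type*} [NormedAddCommGroup V] [InnerProductSpace ℝ V]
    (A : V → V) (cA : ℝ)
    (hA : ∀ w₁ w₂ : V, ‖A w₁ - A w₂‖ ≤ cA * ‖w₁ - w₂‖)
    (T : ℝ) (hT : 0 < T) (N : ℕ) (hN : 0 < N)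
    (w : ℕ → V) (wN wdotN : ℝ → V)
    (hwN : ∀ n : ℕ, 1 ≤ n → n ≤ N →
      ∀ t ∈ Set.Icc (((n - 1 : ℕ) : ℝ) * (T / N)) ((n : ℝ) * (T / N)),
        wN t = w (n - 1) + ((t - ((n - 1 : ℕ) : ℝ) * (T / N)) / (T / N)) • (w n - w (n - 1)))
    (hwdotN : ∀ n : ℕ, 1 ≤ n → n ≤ N →
      ∀ t ∈ Set.Ioo (((n - 1 : ℕ) : ℝ) * (T / N)) ((n : ℝ) * (T / N)),
        wdotN t = (T / N)⁻¹ • (w n - w (n - 1))) :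
    |(∑ n ∈ Finset.Icc 1 N, ⟪A (w n), w n - w (n - 1)⟫) -
        ∫ s in (0:ℝ)..T, ⟪A (wN s), wdotN s⟫| ≤
      (cA / 2) * ∑ n ∈ Finset.Icc 1 N, ‖w n - w (n - 1)‖ ^ 2 := by
  set h := T / N with hhdef
  have hNR : (0:ℝ) < N := Nat.cast_pos.mpr hN
  have hh : 0 < h := div_pos hT hNR
  -- A is continuous
  have hAcont : Continuous A := by
    have : LipschitzWith (Real.toNNReal (max cA 0)) A := by
      apply LipschitzWith.of_dist_le_mul
      intro x y
      rw [dist_eq_norm, dist_eq_norm, Real.coe_toNNReal _ (le_max_right _ _)]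
      exact (hA x y).trans (mul_le_mul_of_nonneg_right (le_max_left _ _) (norm_nonneg _))
    exact this.continuous
  -- cleaned hypotheses
  have hwN' : ∀ i : ℕ, i < N → ∀ t ∈ Set.Icc ((i:ℝ)*h) (((i:ℝ)+1)*h),
      wN t = w i + ((t - (i:ℝ)*h)/h) • (w (i+1) - w i) := by
    intro i hi t ht
    have h1 : ((i + 1 - 1 : ℕ) : ℝ) = (i : ℝ) := by norm_num
    have h2 : ((i + 1 : ℕ) : ℝ) = (i : ℝ) + 1 := by push_cast; ring
    have := hwN (i+1) (by omega) (by omega) t (by rw [h1, h2]; exact ht)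
    simpa [h1] using this
  have hwdotN' : ∀ i : ℕ, i < N → ∀ t ∈ Set.Ioo ((i:ℝ)*h) (((i:ℝ)+1)*h),
      wdotN t = h⁻¹ • (w (i+1) - w i) := by
    intro i hi t ht
    have h1 : ((i + 1 - 1 : ℕ) : ℝ) = (i : ℝ) := by norm_num
    have h2 : ((i + 1 : ℕ) : ℝ) = (i : ℝ) + 1 := by push_cast; ring
    have := hwdotN (i+1) (by omega) (by omega) t (by rw [h1, h2]; exact ht)
    simpa [h1] using this
  set f : ℝ → ℝ := fun s => ⟪A (wN s), wdotN s⟫ with hf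
  -- a.e. equality on each interval with a continuous function
  have haeq : ∀ i : ℕ, i < N → ∀ᵐ t : ℝ, t ∈ Set.uIoc ((i:ℝ)*h) (((i:ℝ)+1)*h) →
      f t = ⟪A (w i + ((t - (i:ℝ)*h)/h) • (w (i+1) - w i)), h⁻¹ • (w (i+1) - w i)⟫ := by
    intro i hi
    have hab : (i:ℝ)*h < ((i:ℝ)+1)*h := by nlinarith
    have hb : ∀ᵐ t : ℝ, t ≠ ((i:ℝ)+1)*h := by
      refine ae_iff.mpr ?_
      simp only [not_ne_iff, Set.setOf_eq_eq_singleton]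
      exact Real.volume_singleton
    filter_upwards [hb] with t ht htmem
    rw [Set.uIoc_of_le hab.le] at htmem
    have htoo : t ∈ Set.Ioo ((i:ℝ)*h) (((i:ℝ)+1)*h) :=
      ⟨htmem.1, lt_of_le_of_ne htmem.2 ht⟩
    simp only [hf]
    rw [hwN' i hi t (Set.Ioo_subset_Icc_self htoo), hwdotN' i hi t htoo]
  -- continuity of the interpolant integrand
  have hφcont : ∀ i : ℕ, Continuous
      (fun t : ℝ => ⟪A (w i + ((t - (i:ℝ)*h)/h) • (w (i+1) - w i)), h⁻¹ • (w (i+1) - w i)⟫) := by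
    intro i
    apply Continuous.inner
    · exact hAcont.comp (by fun_prop)
    · exact continuous_const
  -- interval integrability of f on each piece
  have hint : ∀ i : ℕ, i < N → IntervalIntegrable f volume ((i:ℝ)*h) (((i:ℝ)+1)*h) := by
    intro i hi
    refine (((hφcont i).intervalIntegrable _ _)).congr_ae ?_
    exact (ae_restrict_iff' measurableSet_uIoc).mpr
      ((haeq i hi).mono fun t ht hmem => (ht hmem).symm)
  -- key per-interval estimate
  have key : ∀ i : ℕ, i < N →
      |⟪A (w (i+1)), w (i+1) - w i⟫ - ∫ s in ((i:ℝ)*h)..(((i:ℝ)+1)*h), f s|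
        ≤ cA / 2 * ‖w (i+1) - w i‖ ^ 2 := by
    intro i hi
    set a := (i:ℝ)*h with ha
    set b := ((i:ℝ)+1)*h with hbdef
    have hba : b - a = h := by rw [ha, hbdef]; ring
    have hab : a < b := by nlinarith
    set Δ := w (i+1) - w i with hΔ
    set φ : ℝ → ℝ := fun t => ⟪A (w i + ((t - a)/h) • Δ), h⁻¹ • Δ⟫ with hφ
    have hfφ : ∫ s in a..b, f s = ∫ s in a..b, φ s :=
      intervalIntegral.integral_congr_ae (haeq i hi)
    have hconst : ⟪A (w (i+1)), Δ⟫ = ∫ s in a..b, ⟪A (w (i+1)), h⁻¹ • Δ⟫ := by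
      rw [intervalIntegral.integral_const, hba, real_inner_smul_right, smul_eq_mul]
      field_simp
    rw [hfφ, hconst, ← intervalIntegral.integral_sub
      (intervalIntegrable_const) ((hφcont i).intervalIntegrable a b)]
    have hbound : ∀ s ∈ Set.Icc a b,
        |⟪A (w (i+1)), h⁻¹ • Δ⟫ - φ s| ≤ (cA * ‖Δ‖^2 / h^2) * (b - s) := by
      intro s hs
      rw [hφ, ← inner_sub_left]
      have hgs : w (i+1) - (w i + ((s - a)/h) • Δ) = (1 - (s - a)/h) • Δ := by
        rw [hΔ]; module
      calc |⟪A (w (i+1)) - A (w i + ((s - a)/h) • Δ), h⁻¹ • Δ⟫|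
          ≤ ‖A (w (i+1)) - A (w i + ((s - a)/h) • Δ)‖ * ‖h⁻¹ • Δ‖ :=
            abs_real_inner_le_norm _ _
        _ ≤ (cA * ‖w (i+1) - (w i + ((s - a)/h) • Δ)‖) * ‖h⁻¹ • Δ‖ :=
            mul_le_mul_of_nonneg_right (hA _ _) (norm_nonneg _)
        _ = (cA * ‖Δ‖^2 / h^2) * (b - s) := by
            rw [hgs, norm_smul, norm_smul, Real.norm_eq_abs, Real.norm_eq_abs]
            have h1 : |1 - (s - a)/h| = (b - s)/h := by
              rw [abs_of_nonneg]
              · field_simp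
                linarith [hba]
              · rw [sub_nonneg, div_le_one hh]
                linarith [hs.2, hba]
            rw [h1, abs_of_nonneg (inv_nonneg.mpr hh.le)]
            field_simp
    have hint1 : IntervalIntegrable (fun s => |⟪A (w (i+1)), h⁻¹ • Δ⟫ - φ s|) volume a b := by
      apply Continuous.intervalIntegrable
      exact (continuous_const.sub (hφcont i)).abs
    have hint2 : IntervalIntegrable (fun s => (cA * ‖Δ‖^2 / h^2) * (b - s)) volume a b := by
      apply Continuous.intervalIntegrable
      fun_prop
    calc |∫ s in a..b, (⟪A (w (i+1)), h⁻¹ • Δ⟫ - φ s)|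
        ≤ ∫ s in a..b, |⟪A (w (i+1)), h⁻¹ • Δ⟫ - φ s| :=
          intervalIntegral.abs_integral_le_integral_abs hab.le
      _ ≤ ∫ s in a..b, (cA * ‖Δ‖^2 / h^2) * (b - s) :=
          intervalIntegral.integral_mono_on hab.le hint1 hint2 hbound
      _ = cA / 2 * ‖Δ‖ ^ 2 := by
          rw [intervalIntegral.integral_const_mul]
          have : ∫ s in a..b, (b - s) = h^2/2 := by
            rw [intervalIntegral.integral_sub intervalIntegrable_const
              intervalIntegral.intervalIntegrable_id, intervalIntegral.integral_const,
              integral_id]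
            rw [smul_eq_mul]
            nlinarith [hba]
          rw [this]
          field_simp
  -- split the integral
  have hTN : T = (N:ℝ) * h := by
    rw [hhdef]; field_simp
  have hsplit : ∫ s in (0:ℝ)..T, f s
      = ∑ i ∈ Finset.range N, ∫ s in ((i:ℝ)*h)..(((i:ℝ)+1)*h), f s := by
    have := intervalIntegral.sum_integral_adjacent_intervals
      (a := fun k : ℕ => (k:ℝ)*h) (n := N) (μ := volume) (f := f) ?_
    · have h0 : ((0:ℕ):ℝ)*h = 0 := by norm_num
      rw [hTN, ← h0, ← this]
      refine Finset.sum_congr rfl fun i _ => ?_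
      congr 1
      push_cast; ring
    · intro k hk
      have := hint k hk
      convert this using 2
      push_cast; ring
  -- rewrite sums over Icc as sums over range
  have hsum1 : ∑ n ∈ Finset.Icc 1 N, ⟪A (w n), w n - w (n-1)⟫
      = ∑ i ∈ Finset.range N, ⟪A (w (i+1)), w (i+1) - w i⟫ := by
    rw [← Finset.Ico_add_one_right_eq_Icc, Finset.sum_Ico_eq_sum_range]
    apply Finset.sum_congr (by norm_num)
    intro i _
    norm_num [add_comm 1 i]
  have hsum2 : ∑ n ∈ Finset.Icc 1 N, ‖w n - w (n-1)‖ ^ 2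
      = ∑ i ∈ Finset.range N, ‖w (i+1) - w i‖ ^ 2 := by
    rw [← Finset.Ico_add_one_right_eq_Icc, Finset.sum_Ico_eq_sum_range]
    apply Finset.sum_congr (by norm_num)
    intro i _
    norm_num [add_comm 1 i]
  rw [hsum1, hsum2, hsplit, ← Finset.sum_sub_distrib, Finset.mul_sum]
  calc |∑ i ∈ Finset.range N,
        (⟪A (w (i+1)), w (i+1) - w i⟫ - ∫ s in ((i:ℝ)*h)..(((i:ℝ)+1)*h), f s)|
      ≤ ∑ i ∈ Finset.range N,
        |⟪A (w (i+1)), w (i+1) - w i⟫ - ∫ s in ((i:ℝ)*h)..(((i:ℝ)+1)*h), f s| :=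
        Finset.abs_sum_le_sum_abs _ _
    _ ≤ ∑ i ∈ Finset.range N, cA / 2 * ‖w (i+1) - w i‖ ^ 2 :=
        Finset.sum_le_sum fun i hi => key i (Finset.mem_range.mp hi)
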